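/- In the recommendation cooperative game where each player i in a finite set N has a finite set B_i of items and the value of a coalition S is v(S) = |⋃_{i∈S} B_i|, the Shapley value of player i equals φ_i = Σ_{j ∈ B_i} 1/|{k ∈ N : j ∈ B_k}|. -/
import Mathlib


open Finset

lemma key_nat (K m : ℕ) :
    (∑ s ∈ range (K+1), K.choose s * s.factorial * (K - s + m).factorial) * (m+1)
      = (K + m + 1).factorial := by
  have hrefl : ∑ s ∈ range (K+1), K.choose s * s.factorial * (K - s + m).factorial
      = ∑ t ∈ range (K+1), K.choose (K - t) * (K - t).factorial * (K - (K - t) + m).factorial := by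
    have h := Finset.sum_range_reflect (fun s => K.choose s * s.factorial * (K - s + m).factorial) (K+1)
    simp only [Nat.add_sub_cancel] at h
    exact h.symm
  rw [hrefl]
  have hterm : ∀ t ∈ range (K+1),
      K.choose (K - t) * (K - t).factorial * (K - (K - t) + m).factorial
      = K.factorial * m.factorial * (t + m).choose m := by
    intro t ht
    rw [mem_range, Nat.lt_succ_iff] at ht
    have h1 : K - (K - t) = t := by omega
    rw [h1]
    have h2 : K.choose (K - t) * (K - t).factorial * t.factorial = K.factorial := by
      have := Nat.choose_mul_factorial_mul_factorial (show K - t ≤ K by omega)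
      rwa [h1] at this
    have h3 : (t + m).choose m * m.factorial * t.factorial = (t + m).factorial := by
      have := Nat.choose_mul_factorial_mul_factorial (show m ≤ t + m by omega)
      rwa [Nat.add_sub_cancel] at this
    calc K.choose (K - t) * (K - t).factorial * (t + m).factorial
        = K.choose (K - t) * (K - t).factorial * ((t + m).choose m * m.factorial * t.factorial) := by rw [h3]
      _ = (K.choose (K - t) * (K - t).factorial * t.factorial) * (m.factorial * (t+m).choose m) := by ring
      _ = K.factorial * m.factorial * (t + m).choose m := by rw [h2]; ring
  rw [Finset.sum_congr rfl hterm, ← Finset.mul_sum]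
  have hhs : ∑ t ∈ range (K+1), (t + m).choose m = (K + m + 1).choose (m + 1) := by
    have : ∑ t ∈ range (K+1), (t + m).choose m = ∑ x ∈ Icc m (K + m), x.choose m := by
      rw [← Finset.Ico_add_one_right_eq_Icc, Finset.sum_Ico_eq_sum_range]
      apply Finset.sum_congr (by congr 1; omega)
      intro t ht; congr 1; omega
    rw [this, Nat.sum_Icc_choose]
  rw [hhs]
  have h4 := Nat.choose_mul_factorial_mul_factorial (show m + 1 ≤ K + m + 1 by omega)
  have h5 : K + m + 1 - (m + 1) = K := by omega
  rw [h5] at h4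
  calc K.factorial * m.factorial * (K + m + 1).choose (m + 1) * (m + 1)
      = (K + m + 1).choose (m + 1) * (m.factorial * (m+1)) * K.factorial := by ring
    _ = (K + m + 1).choose (m + 1) * (m+1).factorial * K.factorial := by rw [Nat.factorial_succ]; ring_nf
    _ = (K + m + 1).factorial := h4

lemma key_rat (K m : ℕ) :
    ∑ s ∈ range (K+1),
      (K.choose s : ℚ) * ((Nat.factorial s * Nat.factorial (K - s + m) : ℚ) /
        (Nat.factorial (K + m + 1) : ℚ)) = 1 / ((m : ℚ) + 1) := by
  have hF : ((K + m + 1).factorial : ℚ) ≠ 0 := by positivity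
  have hm : ((m : ℚ) + 1) ≠ 0 := by positivity
  have hcast : (∑ s ∈ range (K+1),
      (K.choose s : ℚ) * (Nat.factorial s : ℚ) * (Nat.factorial (K - s + m) : ℚ)) * ((m : ℚ) + 1)
      = ((K + m + 1).factorial : ℚ) := by exact_mod_cast key_nat K m
  have step : ∑ s ∈ range (K+1),
      (K.choose s : ℚ) * ((Nat.factorial s * Nat.factorial (K - s + m) : ℚ) /
        (Nat.factorial (K + m + 1) : ℚ))
      = (∑ s ∈ range (K+1),
          (K.choose s : ℚ) * (Nat.factorial s : ℚ) * (Nat.factorial (K - s + m) : ℚ)) /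
        ((K + m + 1).factorial : ℚ) := by
    rw [Finset.sum_div]; exact Finset.sum_congr rfl fun s _ => by push_cast; ring
  rw [step, div_eq_div_iff hF hm, one_mul, hcast]


/-- In the recommendation cooperative game with coalition value
`v S = |⋃_{i∈S} B i|`, the Shapley value of player `i` equals
`∑_{j ∈ B i} 1 / |{k ∈ N : j ∈ B k}|`. -/
theorem shapley_closed_form {ι α : Type} [DecidableEq ι] [DecidableEq α]
    (N : Finset ι) (hN : N.Nonempty) (B : ι → Finset α) (i : ι) (hi : i ∈ N) :
    ∑ S ∈ (N.erase i).powerset,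
        ((Nat.factorial S.card * Nat.factorial (N.card - S.card - 1) : ℚ) /
            (Nat.factorial N.card : ℚ)) *
          ((((insert i S).biUnion B).card : ℚ) - ((S.biUnion B).card : ℚ))
      = ∑ j ∈ B i, (1 : ℚ) / ((N.filter fun k => j ∈ B k).card : ℚ) := by
  classical
  set w : Finset ι → ℚ := fun S =>
    ((Nat.factorial S.card * Nat.factorial (N.card - S.card - 1) : ℚ) /
      (Nat.factorial N.card : ℚ)) with hw
  have hmarg : ∀ S ∈ (N.erase i).powerset,
      ((((insert i S).biUnion B).card : ℚ) - ((S.biUnion B).card : ℚ))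
      = ∑ j ∈ B i, if j ∈ S.biUnion B then (0:ℚ) else 1 := by
    intro S _
    have h1 : (insert i S).biUnion B = (B i \ S.biUnion B) ∪ S.biUnion B := by
      rw [Finset.biUnion_insert, Finset.sdiff_union_self_eq_union]
    rw [h1, Finset.card_union_of_disjoint Finset.sdiff_disjoint]
    rw [Finset.sdiff_eq_filter, Finset.card_filter]
    push_cast
    rw [add_sub_cancel_right]
    exact Finset.sum_congr rfl fun j _ => by by_cases h : j ∈ S.biUnion B <;> simp [h]
  calc ∑ S ∈ (N.erase i).powerset, w S *
          ((((insert i S).biUnion B).card : ℚ) - ((S.biUnion B).card : ℚ))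
      = ∑ S ∈ (N.erase i).powerset, ∑ j ∈ B i,
          w S * (if j ∈ S.biUnion B then (0:ℚ) else 1) := by
        exact Finset.sum_congr rfl fun S hS => by rw [hmarg S hS, Finset.mul_sum]
    _ = ∑ j ∈ B i, ∑ S ∈ (N.erase i).powerset,
          w S * (if j ∈ S.biUnion B then (0:ℚ) else 1) := Finset.sum_comm
    _ = ∑ j ∈ B i, (1 : ℚ) / ((N.filter fun k => j ∈ B k).card : ℚ) := by
        apply Finset.sum_congr rfl
        intro j hj
        set A : Finset ι := (N.erase i).filter (fun k => j ∉ B k) with hA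
        have hstep1 : ∑ S ∈ (N.erase i).powerset,
            w S * (if j ∈ S.biUnion B then (0:ℚ) else 1)
            = ∑ S ∈ A.powerset, w S := by
          have hset : (N.erase i).powerset.filter (fun S => j ∉ S.biUnion B) = A.powerset := by
            ext S
            simp only [Finset.mem_filter, Finset.mem_powerset, hA, Finset.subset_iff,
              Finset.mem_biUnion, not_exists, Finset.mem_filter]
            constructor
            · rintro ⟨h1, h2⟩ x hx; exact ⟨h1 hx, fun hb => h2 x ⟨hx, hb⟩⟩
            · intro h; exact ⟨fun x hx => (h hx).1, fun x hxb => (h hxb.1).2 hxb.2⟩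
          rw [← hset, Finset.sum_filter]
          apply Finset.sum_congr rfl
          intro S _
          by_cases h : j ∈ S.biUnion B <;> simp [h]
        rw [hstep1]
        have hwc : ∑ S ∈ A.powerset, w S
            = ∑ s ∈ range (A.card + 1), A.card.choose s •
              ((Nat.factorial s * Nat.factorial (N.card - s - 1) : ℚ) /
                (Nat.factorial N.card : ℚ)) := by
          exact Finset.sum_powerset_apply_card
            (fun s => ((Nat.factorial s * Nat.factorial (N.card - s - 1) : ℚ) /
              (Nat.factorial N.card : ℚ)))
        rw [hwc]
        -- cardinality bookkeeping
        set c := (N.filter fun k => j ∈ B k).card with hc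
        have hiF : i ∈ N.filter fun k => j ∈ B k := Finset.mem_filter.mpr ⟨hi, hj⟩
        have hc1 : 1 ≤ c := Finset.card_pos.mpr ⟨i, hiF⟩
        have hAN : A = N.filter (fun k => j ∉ B k) := by
          rw [hA, Finset.filter_erase]
          exact Finset.erase_eq_of_notMem (by simp [hj])
        have hsum : A.card + c = N.card := by
          rw [hAN, hc]
          rw [add_comm]
          exact Finset.card_filter_add_card_filter_not (fun k => j ∈ B k)
        set K := A.card with hK
        set m := c - 1 with hm
        have hn : N.card = K + m + 1 := by omega
        have key := key_rat K m
        rw [hn]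
        have hfix : ∀ s ∈ range (K + 1),
            A.card.choose s • ((Nat.factorial s * Nat.factorial (K + m + 1 - s - 1) : ℚ) /
              (Nat.factorial (K + m + 1) : ℚ))
            = (K.choose s : ℚ) * ((Nat.factorial s * Nat.factorial (K - s + m) : ℚ) /
              (Nat.factorial (K + m + 1) : ℚ)) := by
          intro s hs
          rw [Finset.mem_range, Nat.lt_succ_iff] at hs
          rw [show K + m + 1 - s - 1 = K - s + m by omega, nsmul_eq_mul]
        rw [Finset.sum_congr rfl hfix, key]
        have : (c : ℚ) = (m : ℚ) + 1 := by
          have : c = m + 1 := by omega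
          exact_mod_cast congrArg (Nat.cast : ℕ → ℚ) this
        rw [this]
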